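/- Let w : ℤ₊ → (0,∞) be a weight. Then the set Γ := {(p, δ) ∈ (1,∞) × ℝ : the weight k ↦ w_k^{δ/p} belongs to the Muckenhoupt class A_p(ℤ₊)} is a convex subset of ℝ². -/

import Mathlib

/-- The Muckenhoupt ratio of the weight `w` over the interval `{l, ..., n}` of `ℤ₊ = ℕ`. -/
noncomputable def apRatioN (p q : ℝ) (w : ℕ → ℝ) (l n : ℕ) : ℝ :=
  ((Finset.Icc l n).card : ℝ)⁻¹ * (∑ k ∈ Finset.Icc l n, w k ^ p) ^ (1 / p) *
    (∑ k ∈ Finset.Icc l n, w k ^ (-q)) ^ (1 / q)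

/-- `w ∈ A_p(ℤ₊)`: the Muckenhoupt ratios over all intervals are uniformly bounded. -/
def MemApN (p q : ℝ) (w : ℕ → ℝ) : Prop :=
  ∃ C : ℝ, ∀ l n : ℕ, l ≤ n → apRatioN p q w l n ≤ C

/-- Hölder: log-convexity of `γ ↦ ∑ w^γ`. -/
lemma hold_sum (s : Finset ℕ) (w : ℕ → ℝ) (hw : ∀ k, 0 < w k) (α β θ : ℝ)
    (h0 : 0 ≤ θ) (h1 : θ ≤ 1) :
    ∑ k ∈ s, w k ^ (θ * α + (1 - θ) * β) ≤
      (∑ k ∈ s, w k ^ α) ^ θ * (∑ k ∈ s, w k ^ β) ^ (1 - θ) := by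
  rcases eq_or_lt_of_le h0 with rfl | hθ0
  · simp
  rcases eq_or_lt_of_le h1 with rfl | hθ1
  · simp
  have hθ1' : 0 < 1 - θ := by linarith
  have hpq : (1/θ).HolderConjugate (1/(1-θ)) := by
    rw [Real.holderConjugate_iff]; constructor
    · rw [lt_div_iff₀ hθ0]; linarith
    · simp
  calc ∑ k ∈ s, w k ^ (θ * α + (1 - θ) * β)
      = ∑ k ∈ s, (w k ^ (θ * α)) * (w k ^ ((1 - θ) * β)) := by
        refine Finset.sum_congr rfl fun k _ => ?_
        rw [← Real.rpow_add (hw k)]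
    _ ≤ (∑ k ∈ s, (w k ^ (θ * α)) ^ (1/θ)) ^ (1/(1/θ)) *
        (∑ k ∈ s, (w k ^ ((1 - θ) * β)) ^ (1/(1-θ))) ^ (1/(1/(1-θ))) := by
        exact Real.inner_le_Lp_mul_Lq_of_nonneg s hpq
          (fun k _ => (Real.rpow_pos_of_pos (hw k) _).le)
          (fun k _ => (Real.rpow_pos_of_pos (hw k) _).le)
    _ = (∑ k ∈ s, w k ^ α) ^ θ * (∑ k ∈ s, w k ^ β) ^ (1 - θ) := by
        rw [one_div_one_div, one_div_one_div]
        congr 2 <;> refine Finset.sum_congr rfl fun k _ => ?_ <;>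
          rw [← Real.rpow_mul (hw k).le] <;> congr 1 <;> field_simp

lemma apRatioN_eq (w : ℕ → ℝ) (hw : ∀ k, 0 < w k) {p : ℝ} (δ : ℝ) (hp : 1 < p) (l n : ℕ) :
    apRatioN p (p / (p - 1)) (fun k => w k ^ (δ / p)) l n =
      ((Finset.Icc l n).card : ℝ)⁻¹ * (∑ k ∈ Finset.Icc l n, w k ^ δ) ^ (1 / p) *
        (∑ k ∈ Finset.Icc l n, w k ^ (-(δ / (p - 1)))) ^ ((p - 1) / p) := by
  have hp0 : (0:ℝ) < p := by linarith
  have hp1 : (0:ℝ) < p - 1 := by linarith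
  have e1 : ∀ k : ℕ, (w k ^ (δ / p)) ^ p = w k ^ δ := by
    intro k
    rw [← Real.rpow_mul (hw k).le]
    congr 1
    field_simp
  have e2 : ∀ k : ℕ, (w k ^ (δ / p)) ^ (-(p / (p - 1))) = w k ^ (-(δ / (p - 1))) := by
    intro k
    rw [← Real.rpow_mul (hw k).le]
    congr 1
    field_simp
  have e3 : 1 / (p / (p - 1)) = (p - 1) / p := one_div_div _ _
  unfold apRatioN
  rw [e3, Finset.sum_congr rfl fun k _ => e1 k, Finset.sum_congr rfl fun k _ => e2 k]

lemma key (w : ℕ → ℝ) (hw : ∀ k, 0 < w k) {p₀ p₁ δ₀ δ₁ a b : ℝ}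
    (hp₀ : 1 < p₀) (hp₁ : 1 < p₁) (ha : 0 ≤ a) (hb : 0 ≤ b) (hab : a + b = 1)
    (hp : 1 < a * p₀ + b * p₁) (l n : ℕ) (hln : l ≤ n) :
    apRatioN (a * p₀ + b * p₁) ((a * p₀ + b * p₁) / (a * p₀ + b * p₁ - 1))
        (fun k => w k ^ ((a * δ₀ + b * δ₁) / (a * p₀ + b * p₁))) l n ≤
      apRatioN p₀ (p₀ / (p₀ - 1)) (fun k => w k ^ (δ₀ / p₀)) l n ^ (a * p₀ / (a * p₀ + b * p₁)) *
      apRatioN p₁ (p₁ / (p₁ - 1)) (fun k => w k ^ (δ₁ / p₁)) l n ^ (b * p₁ / (a * p₀ + b * p₁)) := by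
  set p : ℝ := a * p₀ + b * p₁ with hpdef
  set δ : ℝ := a * δ₀ + b * δ₁ with hδdef
  have hp0 : (0:ℝ) < p := by linarith
  have hp1 : (0:ℝ) < p - 1 := by linarith
  have hq0 : (0:ℝ) < p₀ - 1 := by linarith
  have hq1 : (0:ℝ) < p₁ - 1 := by linarith
  have hsub : p - 1 = a * (p₀ - 1) + b * (p₁ - 1) := by rw [hpdef]; ring_nf; linarith [hab]
  set s : Finset ℕ := Finset.Icc l n with hs
  have hsne : s.Nonempty := ⟨l, by simp [hs, hln]⟩
  set N : ℝ := (s.card : ℝ) with hN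
  have hN0 : (0:ℝ) < N := by
    have h := Finset.card_pos.mpr hsne
    rw [hN]; exact_mod_cast h
  have hNi : (0:ℝ) ≤ N⁻¹ := inv_nonneg.mpr hN0.le
  have hS : ∀ γ : ℝ, 0 < ∑ k ∈ s, w k ^ γ :=
    fun γ => Finset.sum_pos (fun k _ => Real.rpow_pos_of_pos (hw k) γ) hsne
  rw [apRatioN_eq w hw δ hp l n, apRatioN_eq w hw δ₀ hp₀ l n, apRatioN_eq w hw δ₁ hp₁ l n]
  set S0 : ℝ := ∑ k ∈ s, w k ^ δ₀ with hS0
  set S1 : ℝ := ∑ k ∈ s, w k ^ δ₁ with hS1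
  set T0 : ℝ := ∑ k ∈ s, w k ^ (-(δ₀ / (p₀ - 1))) with hT0
  set T1 : ℝ := ∑ k ∈ s, w k ^ (-(δ₁ / (p₁ - 1))) with hT1
  have hS0' : (0:ℝ) ≤ S0 := (hS _).le
  have hS1' : (0:ℝ) ≤ S1 := (hS _).le
  have hT0' : (0:ℝ) ≤ T0 := (hS _).le
  have hT1' : (0:ℝ) ≤ T1 := (hS _).le
  have comb : a * p₀ / p + b * p₁ / p = 1 := by
    rw [← add_div, ← hpdef, div_self hp0.ne']
  -- step 1
  have step1 : (∑ k ∈ s, w k ^ δ) ^ (1 / p) ≤ S0 ^ (a / p) * S1 ^ (b / p) := by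
    have h1 : ∑ k ∈ s, w k ^ δ ≤ S0 ^ a * S1 ^ b := by
      have h := hold_sum s w hw δ₀ δ₁ a ha (by linarith)
      rw [show (1 : ℝ) - a = b by linarith] at h
      rw [hδdef]
      convert h using 3
      try ring
    calc (∑ k ∈ s, w k ^ δ) ^ (1 / p) ≤ (S0 ^ a * S1 ^ b) ^ (1 / p) :=
          Real.rpow_le_rpow (hS δ).le h1 (by positivity)
      _ = S0 ^ (a / p) * S1 ^ (b / p) := by
          rw [Real.mul_rpow (Real.rpow_nonneg hS0' _) (Real.rpow_nonneg hS1' _),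
            ← Real.rpow_mul hS0', ← Real.rpow_mul hS1', mul_one_div, mul_one_div]
  -- step 2
  have step2 : (∑ k ∈ s, w k ^ (-(δ / (p - 1)))) ^ ((p - 1) / p) ≤
      T0 ^ (a * (p₀ - 1) / p) * T1 ^ (b * (p₁ - 1) / p) := by
    set θ : ℝ := a * (p₀ - 1) / (p - 1) with hθ
    have hθ0 : 0 ≤ θ := div_nonneg (mul_nonneg ha hq0.le) hp1.le
    have hθ1 : θ ≤ 1 := by
      rw [hθ, div_le_one hp1, hsub]
      nlinarith
    have h1θ : 1 - θ = b * (p₁ - 1) / (p - 1) := by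
      rw [hθ, eq_div_iff hp1.ne', sub_mul, div_mul_cancel₀ _ hp1.ne', hsub]
      ring
    have h2 : ∑ k ∈ s, w k ^ (-(δ / (p - 1))) ≤ T0 ^ θ * T1 ^ (1 - θ) := by
      have h := hold_sum s w hw (-(δ₀ / (p₀ - 1))) (-(δ₁ / (p₁ - 1))) θ hθ0 hθ1
      convert h using 3
      rw [h1θ, hθ, hδdef]
      field_simp
      try ring
    calc (∑ k ∈ s, w k ^ (-(δ / (p - 1)))) ^ ((p - 1) / p)
        ≤ (T0 ^ θ * T1 ^ (1 - θ)) ^ ((p - 1) / p) :=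
          Real.rpow_le_rpow (hS _).le h2 (div_nonneg hp1.le hp0.le)
      _ = T0 ^ (a * (p₀ - 1) / p) * T1 ^ (b * (p₁ - 1) / p) := by
          rw [Real.mul_rpow (Real.rpow_nonneg hT0' _) (Real.rpow_nonneg hT1' _),
            ← Real.rpow_mul hT0', ← Real.rpow_mul hT1', h1θ, hθ,
            show a * (p₀ - 1) / (p - 1) * ((p - 1) / p) = a * (p₀ - 1) / p by
              field_simp,
            show b * (p₁ - 1) / (p - 1) * ((p - 1) / p) = b * (p₁ - 1) / p by
              field_simp]
  -- expand RHS
  have hNinv : N⁻¹ ^ (a * p₀ / p) * N⁻¹ ^ (b * p₁ / p) = N⁻¹ := by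
    rw [← Real.rpow_add (inv_pos.mpr hN0), comb, Real.rpow_one]
  have rhs_eq :
      (N⁻¹ * S0 ^ (1 / p₀) * T0 ^ ((p₀ - 1) / p₀)) ^ (a * p₀ / p) *
        (N⁻¹ * S1 ^ (1 / p₁) * T1 ^ ((p₁ - 1) / p₁)) ^ (b * p₁ / p) =
      N⁻¹ * (S0 ^ (a / p) * S1 ^ (b / p)) * (T0 ^ (a * (p₀ - 1) / p) * T1 ^ (b * (p₁ - 1) / p)) := by
    rw [Real.mul_rpow (mul_nonneg hNi (Real.rpow_nonneg hS0' _)) (Real.rpow_nonneg hT0' _),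
      Real.mul_rpow hNi (Real.rpow_nonneg hS0' _),
      Real.mul_rpow (mul_nonneg hNi (Real.rpow_nonneg hS1' _)) (Real.rpow_nonneg hT1' _),
      Real.mul_rpow hNi (Real.rpow_nonneg hS1' _),
      ← Real.rpow_mul hS0', ← Real.rpow_mul hS1',
      ← Real.rpow_mul hT0', ← Real.rpow_mul hT1',
      show 1 / p₀ * (a * p₀ / p) = a / p by field_simp; try ring,
      show 1 / p₁ * (b * p₁ / p) = b / p by field_simp; try ring,
      show (p₀ - 1) / p₀ * (a * p₀ / p) = a * (p₀ - 1) / p by field_simp; try ring,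
      show (p₁ - 1) / p₁ * (b * p₁ / p) = b * (p₁ - 1) / p by field_simp; try ring]
    conv_rhs => rw [← hNinv]
    ring
  rw [rhs_eq]
  have hmul := mul_le_mul step1 step2 (Real.rpow_nonneg (hS _).le _)
    (mul_nonneg (Real.rpow_nonneg hS0' _) (Real.rpow_nonneg hS1' _))
  calc N⁻¹ * (∑ k ∈ s, w k ^ δ) ^ (1 / p) * (∑ k ∈ s, w k ^ (-(δ / (p - 1)))) ^ ((p - 1) / p)
      = N⁻¹ * ((∑ k ∈ s, w k ^ δ) ^ (1 / p) * (∑ k ∈ s, w k ^ (-(δ / (p - 1)))) ^ ((p - 1) / p)) := by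
        ring
    _ ≤ N⁻¹ * ((S0 ^ (a / p) * S1 ^ (b / p)) * (T0 ^ (a * (p₀ - 1) / p) * T1 ^ (b * (p₁ - 1) / p))) :=
        mul_le_mul_of_nonneg_left hmul hNi
    _ = N⁻¹ * (S0 ^ (a / p) * S1 ^ (b / p)) * (T0 ^ (a * (p₀ - 1) / p) * T1 ^ (b * (p₁ - 1) / p)) := by
        ring

lemma apRatioN_nonneg (p q : ℝ) (w : ℕ → ℝ) (hw : ∀ k, 0 ≤ w k) (l n : ℕ) :
    0 ≤ apRatioN p q w l n :=
  mul_nonneg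
    (mul_nonneg (inv_nonneg.mpr (Nat.cast_nonneg _))
      (Real.rpow_nonneg (Finset.sum_nonneg fun k _ => Real.rpow_nonneg (hw k) _) _))
    (Real.rpow_nonneg (Finset.sum_nonneg fun k _ => Real.rpow_nonneg (hw k) _) _)

/-- **"Convexity" property of discrete Muckenhoupt weights.** For a weight
`w : ℤ₊ → (0,∞)`, the set `Γ = {(p,δ) ∈ (1,∞) × ℝ : w^{δ/p} ∈ A_p(ℤ₊)}` is convex. -/
theorem convex_muckenhoupt_parameter_set (w : ℕ → ℝ) (hw : ∀ k, 0 < w k) :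
    Convex ℝ {pd : ℝ × ℝ | 1 < pd.1 ∧
      MemApN pd.1 (pd.1 / (pd.1 - 1)) (fun k => w k ^ (pd.2 / pd.1))} := by
  intro x hx y hy a b ha hb hab
  simp only [Set.mem_setOf_eq] at hx hy ⊢
  obtain ⟨hx1, Cx, hCx⟩ := hx
  obtain ⟨hy1, Cy, hCy⟩ := hy
  simp only [Prod.fst_add, Prod.snd_add, Prod.smul_fst, Prod.smul_snd, smul_eq_mul]
  have hp : 1 < a * x.1 + b * y.1 := by
    rcases eq_or_lt_of_le ha with rfl | ha'
    · have hb1 : b = 1 := by linarith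
      rw [hb1]
      simpa using hy1
    · linarith [mul_lt_mul_of_pos_left hx1 ha', mul_le_mul_of_nonneg_left hy1.le hb]
  refine ⟨hp, ?_⟩
  have hlam : 0 ≤ a * x.1 / (a * x.1 + b * y.1) :=
    div_nonneg (mul_nonneg ha (by linarith)) (by linarith)
  have hmu : 0 ≤ b * y.1 / (a * x.1 + b * y.1) :=
    div_nonneg (mul_nonneg hb (by linarith)) (by linarith)
  refine ⟨(max Cx 1) ^ (a * x.1 / (a * x.1 + b * y.1)) *
    (max Cy 1) ^ (b * y.1 / (a * x.1 + b * y.1)), fun l n hln => ?_⟩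
  have hk := key w hw (δ₀ := x.2) (δ₁ := y.2) hx1 hy1 ha hb hab hp l n hln
  refine hk.trans ?_
  have hR0 := apRatioN_nonneg x.1 (x.1 / (x.1 - 1)) (fun k => w k ^ (x.2 / x.1))
    (fun k => (Real.rpow_pos_of_pos (hw k) _).le) l n
  have hR1 := apRatioN_nonneg y.1 (y.1 / (y.1 - 1)) (fun k => w k ^ (y.2 / y.1))
    (fun k => (Real.rpow_pos_of_pos (hw k) _).le) l n
  exact mul_le_mul
    (Real.rpow_le_rpow hR0 ((hCx l n hln).trans (le_max_left _ _)) hlam)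
    (Real.rpow_le_rpow hR1 ((hCy l n hln).trans (le_max_left _ _)) hmu)
    (Real.rpow_nonneg hR1 _)
    (Real.rpow_nonneg (zero_le_one.trans (le_max_right _ _)) _)
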